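/- Let Γ be a commutative thick weakly distance-regular digraph. If Γ_{a,b} ∈ Γ_{q-1,1}^i Γ_{1,h-1}^j for some h ∉ {q-1, q} with h ∈ T, (1,q-1) attained, i,j ∈ {1,2}, and Γ_{1,h-1}^2 ∩ Γ_{1,q-1}Γ_{q-1,1} ≠ ∅, then Γ_{a,b} ∈ Γ_{q-1,1}^i Γ_{h-1,1}^j. -/
import Mathlib


/-!
Common framework: commutative thick weakly distance-regular digraphs.
-/

variable {V : Type*}

/-- There is a directed walk of length `n` from `x` to `y`. -/
def HasWalk (adj : V → V → Prop) (x y : V) (n : ℕ) : Prop :=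
  ∃ f : ℕ → V, f 0 = x ∧ f n = y ∧ ∀ i < n, adj (f i) (f (i + 1))

/-- Directed distance `∂(x,y)`. -/
noncomputable def ddist (adj : V → V → Prop) (x y : V) : ℕ :=
  sInf {n | HasWalk adj x y n}

/-- Two-way distance `∂̃(x,y) = (∂(x,y), ∂(y,x))`. -/
noncomputable def tdist (adj : V → V → Prop) (x y : V) : ℕ × ℕ :=
  (ddist adj x y, ddist adj y x)

/-- The pair `i` is an attained two-way distance, i.e. `i ∈ ∂̃(Γ)`. -/
def Attained (adj : V → V → Prop) (i : ℕ × ℕ) : Prop :=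
  ∃ x y : V, tdist adj x y = i

/-- Intersection number `p^h_{i,j}`: for attained `h` it is the common cardinality of
`{z | ∂̃(x,z) = i, ∂̃(z,y) = j}` over pairs with `∂̃(x,y) = h` (and `0` otherwise). -/
noncomputable def pnum (adj : V → V → Prop) (h i j : ℕ × ℕ) : ℕ :=
  sSup {n | ∃ x y : V, tdist adj x y = h ∧
    n = Set.ncard {z : V | tdist adj x z = i ∧ tdist adj z y = j}}

/-- Valency `k_i = |Γ_i(x)|`. -/
noncomputable def kval (adj : V → V → Prop) (i : ℕ × ℕ) : ℕ :=
  pnum adj (0, 0) i i.swap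

/-- Adjacency of the subdigraph `Δ_J`: arcs of type `(1, t-1)` for `t ∈ J`. -/
def deltaAdj (adj : V → V → Prop) (J : Set ℕ) (u v : V) : Prop :=
  ∃ t ∈ J, tdist adj u v = (1, t - 1)

/-- A circuit of length `s`. -/
def IsCircuit (adj : V → V → Prop) (s : ℕ) (f : ℕ → V) : Prop :=
  0 < s ∧ f s = f 0 ∧ ∀ i < s, adj (f i) (f (i + 1))

/-- Strongly connected. -/
def IsStrong (adj : V → V → Prop) : Prop :=
  ∀ x y : V, ∃ n, HasWalk adj x y n

/-- Weakly distance-regular: the intersection numbers are well defined. -/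
def IsWDR (adj : V → V → Prop) : Prop :=
  ∀ (i j : ℕ × ℕ) (x y x' y' : V), tdist adj x y = tdist adj x' y' →
    Set.ncard {z : V | tdist adj x z = i ∧ tdist adj z y = j}
      = Set.ncard {z : V | tdist adj x' z = i ∧ tdist adj z y' = j}

/-- Thick: `p^h_{i,i}, p^h_{i,i*} ∈ {0, k_i}`. -/
def IsThick (adj : V → V → Prop) : Prop :=
  ∀ h i : ℕ × ℕ,
    (pnum adj h i i = 0 ∨ pnum adj h i i = kval adj i) ∧
    (pnum adj h i i.swap = 0 ∨ pnum adj h i i.swap = kval adj i)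

/-- A thick weakly distance-regular digraph (as a property of an adjacency relation). -/
def IsWDRThick (adj : V → V → Prop) : Prop :=
  IsStrong adj ∧ IsWDR adj ∧ IsThick adj

/-- A commutative thick weakly distance-regular digraph. -/
structure CTWDR (V : Type*) [Fintype V] where
  adj : V → V → Prop
  loopless : ∀ v, ¬ adj v v
  strong : IsStrong adj
  wdr : IsWDR adj
  comm : ∀ (i j : ℕ × ℕ) (x y : V),
    Set.ncard {z : V | tdist adj x z = i ∧ tdist adj z y = j}
      = Set.ncard {z : V | tdist adj x z = j ∧ tdist adj z y = i}
  thick : IsThick adj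

namespace CTWDR

variable {V : Type*} [Fintype V] (G : CTWDR V)

/-- Product `EF` of two sets of relations (relations identified with two-way distances). -/
def prodS (E F : Set (ℕ × ℕ)) : Set (ℕ × ℕ) :=
  {h | ∃ i ∈ E, ∃ j ∈ F, pnum G.adj h i j ≠ 0}

/-- Powers `Γ_i^l` (with `Γ_i^0 = {Γ_{(0,0)}}` and `Γ_i^1 = {Γ_i}`). -/
def pow (i : ℕ × ℕ) : ℕ → Set (ℕ × ℕ)
  | 0 => {(0, 0)}
  | 1 => {i}
  | n + 2 => G.prodS (pow i (n + 1)) {i}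

/-- The pair `(1, s-1)` is pure: every circuit of length `s` containing an arc of type
`(1, s-1)` consists of arcs of type `(1, s-1)`. -/
def Pure (s : ℕ) : Prop :=
  ∀ f : ℕ → V, IsCircuit G.adj s f →
    (∃ i < s, tdist G.adj (f i) (f (i + 1)) = (1, s - 1)) →
    ∀ i < s, tdist G.adj (f i) (f (i + 1)) = (1, s - 1)

/-- `(1, s-1)` is mixed. -/
def Mixed (s : ℕ) : Prop := ¬ G.Pure s

/-- Configuration `C(q)` exists. -/
def Cexists (q : ℕ) : Prop :=
  pnum G.adj (1, q - 2) (1, q - 1) (1, q - 1) ≠ 0 ∧ G.Pure (q - 1)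

/-- Configuration `D(q)` exists. -/
def Dexists (q : ℕ) : Prop :=
  pnum G.adj (1, q - 1) (1, q - 2) (q - 2, 1) ≠ 0 ∧ G.Pure (q - 1)

/-- A closed set of relations: `Γ_{i*}Γ_j ⊆ F` for all `i, j ∈ F`. -/
def Closed (F : Set (ℕ × ℕ)) : Prop :=
  ∀ i ∈ F, ∀ j ∈ F, G.prodS {i.swap} {j} ⊆ F

/-- The minimal closed set `⟨F⟩` containing `F`. -/
def genClosed (F : Set (ℕ × ℕ)) : Set (ℕ × ℕ) :=
  ⋂₀ {C | F ⊆ C ∧ G.Closed C}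

/-- The block `F_J(x)` of the closed set generated by `{Γ_{1,t-1}}_{t ∈ J}`. -/
def block (J : Set ℕ) (x : V) : Set V :=
  {y | tdist G.adj x y ∈ G.genClosed {i | ∃ t ∈ J, i = (1, t - 1)}}

end CTWDR


section Stmt19Helpers

variable {V : Type*} [Fintype V]

private lemma hasWalk_zero (adj : V → V → Prop) (x : V) : HasWalk adj x x 0 :=
  ⟨fun _ => x, rfl, rfl, fun i hi => absurd hi (Nat.not_lt_zero i)⟩

private lemma tdist_self' (adj : V → V → Prop) (x : V) : tdist adj x x = (0, 0) := by
  have h : ddist adj x x = 0 := Nat.sInf_eq_zero.mpr (Or.inl (hasWalk_zero adj x))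
  simp [tdist, h]

private lemma tdist_swap' (adj : V → V → Prop) (x y : V) :
    tdist adj y x = (tdist adj x y).swap := rfl

private lemma pnum_eq {adj : V → V → Prop} (hw : IsWDR adj) {c i j : ℕ × ℕ} {x y : V}
    (hxy : tdist adj x y = c) :
    pnum adj c i j = Set.ncard {z : V | tdist adj x z = i ∧ tdist adj z y = j} := by
  have hset : {n | ∃ x' y' : V, tdist adj x' y' = c ∧
      n = Set.ncard {z : V | tdist adj x' z = i ∧ tdist adj z y' = j}}
      = {Set.ncard {z : V | tdist adj x z = i ∧ tdist adj z y = j}} := by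
    ext n
    simp only [Set.mem_setOf_eq, Set.mem_singleton_iff]
    constructor
    · rintro ⟨x', y', h1, rfl⟩
      exact hw i j x' y' x y (h1.trans hxy.symm)
    · rintro rfl
      exact ⟨x, y, hxy, rfl⟩
  rw [pnum, hset, csSup_singleton]

private lemma exists_pair_of_pnum_ne {adj : V → V → Prop} {c i j : ℕ × ℕ}
    (hne : pnum adj c i j ≠ 0) : ∃ x y : V, tdist adj x y = c := by
  by_contra hc
  push_neg at hc
  apply hne
  have hset : {n | ∃ x' y' : V, tdist adj x' y' = c ∧
      n = Set.ncard {z : V | tdist adj x' z = i ∧ tdist adj z y' = j}} = ∅ :=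
    Set.eq_empty_iff_forall_notMem.mpr (by rintro n ⟨x', y', h1, -⟩; exact hc x' y' h1)
  rw [pnum, hset]
  exact csSup_empty

private lemma pnum_ne_of_tri {adj : V → V → Prop} (hw : IsWDR adj) {x z y : V} {i j c : ℕ × ℕ}
    (hxz : tdist adj x z = i) (hzy : tdist adj z y = j) (hxy : tdist adj x y = c) :
    pnum adj c i j ≠ 0 := by
  rw [pnum_eq hw hxy]
  have hmem : z ∈ {w : V | tdist adj x w = i ∧ tdist adj w y = j} := ⟨hxz, hzy⟩
  intro h0
  rw [Set.ncard_eq_zero (Set.toFinite _)] at h0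
  rw [h0] at hmem
  exact hmem

private lemma exists_mid {adj : V → V → Prop} (hw : IsWDR adj) {c i j : ℕ × ℕ} {x y : V}
    (hne : pnum adj c i j ≠ 0) (hxy : tdist adj x y = c) :
    ∃ z : V, tdist adj x z = i ∧ tdist adj z y = j := by
  rw [pnum_eq hw hxy] at hne
  exact Set.nonempty_of_ncard_ne_zero hne

private lemma full {adj : V → V → Prop} (hw : IsWDR adj) {c i j : ℕ × ℕ} {x y z : V}
    (hk : pnum adj c i j = kval adj i)
    (hxy : tdist adj x y = c) (hxz : tdist adj x z = i) : tdist adj z y = j := by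
  have h1 : Set.ncard {w : V | tdist adj x w = i ∧ tdist adj w y = j} = pnum adj c i j :=
    (pnum_eq hw hxy).symm
  have h2 : kval adj i = Set.ncard {w : V | tdist adj x w = i ∧ tdist adj w x = i.swap} :=
    pnum_eq hw (tdist_self' adj x)
  have hss : {w : V | tdist adj x w = i ∧ tdist adj w y = j}
      ⊆ {w : V | tdist adj x w = i ∧ tdist adj w x = i.swap} := by
    rintro w ⟨hw1, -⟩
    exact ⟨hw1, by rw [tdist_swap' adj x w, hw1]⟩
  have heq := Set.eq_of_subset_of_ncard_le hss (by rw [h1, hk, h2]) (Set.toFinite _)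
  have hz : z ∈ {w : V | tdist adj x w = i ∧ tdist adj w y = j} := by
    rw [heq]
    exact ⟨hxz, by rw [tdist_swap' adj x z, hxz]⟩
  exact hz.2

private lemma partner {adj : V → V → Prop} (hw : IsWDR adj) {c : ℕ × ℕ}
    (hc : ∃ p s : V, tdist adj p s = c) (m : V) : ∃ t : V, tdist adj m t = c := by
  obtain ⟨p, s, hps⟩ := hc
  have h0 : pnum adj (0, 0) c c.swap ≠ 0 :=
    pnum_ne_of_tri hw hps (by rw [tdist_swap' adj p s, hps]) (tdist_self' adj p)
  obtain ⟨t, ht, -⟩ := exists_mid hw h0 (tdist_self' adj m)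
  exact ⟨t, ht⟩

end Stmt19Helpers

/-- Lemma 6.9: if `Γ_{a,b} ∈ Γ_{q-1,1}^i Γ_{1,h-1}^j` with `h ∉ {q-1,q}`,
`i, j ∈ {1,2}` and `Γ_{1,h-1}^2 ∩ Γ_{1,q-1}Γ_{q-1,1} ≠ ∅`, then
`Γ_{a,b} ∈ Γ_{q-1,1}^i Γ_{h-1,1}^j`. -/
theorem stmt19 {V : Type*} [Fintype V] (G : CTWDR V) (q h a b : ℕ)
    (hq : Attained G.adj (1, q - 1)) (hhatt : Attained G.adj (1, h - 1))
    (hh1 : h ≠ q - 1) (hh2 : h ≠ q)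
    (hcap : (G.pow (1, h - 1) 2 ∩ G.prodS {(1, q - 1)} {(q - 1, 1)}).Nonempty)
    (i j : ℕ) (hi : i = 1 ∨ i = 2) (hj : j = 1 ∨ j = 2)
    (hmem : (a, b) ∈ G.prodS (G.pow (q - 1, 1) i) (G.pow (1, h - 1) j)) :
    (a, b) ∈ G.prodS (G.pow (q - 1, 1) i) (G.pow (h - 1, 1) j) := by
  classical
  have hw := G.wdr
  obtain ⟨c, hc1, hc2⟩ := hcap
  obtain ⟨iA, hiA, jA, hjA, hAA⟩ := hc2
  rw [Set.mem_singleton_iff] at hiA hjA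
  subst hiA; subst hjA
  have hc1' : c ∈ G.prodS (G.pow (1, h - 1) 1) {(1, h - 1)} := hc1
  obtain ⟨iB, hiB, jB, hjB, hBB⟩ := hc1'
  have hiB' : iB = (1, h - 1) := hiB
  rw [Set.mem_singleton_iff] at hjB
  subst hiB'; subst hjB
  have hBBk : pnum G.adj c (1, h - 1) (1, h - 1) = kval G.adj (1, h - 1) :=
    (G.thick c (1, h - 1)).1.resolve_left hBB
  have hAAk : pnum G.adj c (1, q - 1) (q - 1, 1) = kval G.adj (1, q - 1) :=
    (G.thick c (1, q - 1)).2.resolve_left hAA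
  have stepB : ∀ p s z : V, tdist G.adj p s = c → tdist G.adj p z = (1, h - 1) →
      tdist G.adj z s = (1, h - 1) := fun p s z hps hpz => full hw hBBk hps hpz
  have stepA : ∀ p s z : V, tdist G.adj p s = c → tdist G.adj p z = (1, q - 1) →
      tdist G.adj z s = (q - 1, 1) := fun p s z hps hpz => full hw hAAk hps hpz
  have cpartner : ∀ m : V, ∃ t : V, tdist G.adj m t = c :=
    partner hw (exists_pair_of_pnum_ne hBB)
  have kAne : kval G.adj (1, q - 1) ≠ 0 := hAAk ▸ hAA
  have kAne' : pnum G.adj (0, 0) (1, q - 1) (q - 1, 1) ≠ 0 := kAne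
  have outA : ∀ m : V, ∃ z : V, tdist G.adj m z = (1, q - 1) := by
    intro m
    obtain ⟨z, hz, -⟩ := exists_mid hw kAne' (tdist_self' G.adj m)
    exact ⟨z, hz⟩
  have absorb : ∀ m t x' : V,
      (∃ z : V, tdist G.adj m z = (1, q - 1) ∧ tdist G.adj z t = (q - 1, 1)) →
      tdist G.adj x' m = (q - 1, 1) → tdist G.adj x' t = (q - 1, 1) := by
    rintro m t x' ⟨z, hz1, hz2⟩ hx'
    have hdne : pnum G.adj (tdist G.adj m t) (1, q - 1) (q - 1, 1) ≠ 0 :=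
      pnum_ne_of_tri hw hz1 hz2 rfl
    have hdk : pnum G.adj (tdist G.adj m t) (1, q - 1) (q - 1, 1) = kval G.adj (1, q - 1) :=
      (G.thick (tdist G.adj m t) (1, q - 1)).2.resolve_left hdne
    have hmx' : tdist G.adj m x' = (1, q - 1) := by
      rw [tdist_swap' G.adj x' m, hx']
      rfl
    exact full hw hdk rfl hmx'
  obtain ⟨it, hit, jt, hjt, hmain⟩ := hmem
  obtain ⟨x, y, hxy⟩ := exists_pair_of_pnum_ne hmain
  obtain ⟨m, hxm, hmy⟩ := exists_mid hw hmain hxy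
  have htail : ∃ t : V,
      (∃ z : V, tdist G.adj m z = (1, q - 1) ∧ tdist G.adj z t = (q - 1, 1)) ∧
      tdist G.adj t y ∈ G.pow (h - 1, 1) j := by
    rcases hj with rfl | rfl
    · have hjt' : jt = (1, h - 1) := hjt
      subst hjt'
      obtain ⟨t, hmt⟩ := cpartner m
      obtain ⟨z, hz⟩ := outA m
      refine ⟨t, ⟨z, hz, stepA m t z hmt hz⟩, ?_⟩
      have hyt : tdist G.adj y t = (1, h - 1) := stepB m t y hmt hmy
      have hty : tdist G.adj t y = (h - 1, 1) := by rw [tdist_swap' G.adj y t, hyt]; rfl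
      rw [hty]
      rfl
    · have hjt' : jt ∈ G.prodS (G.pow (1, h - 1) 1) {(1, h - 1)} := hjt
      obtain ⟨b1, hb1, b2, hb2, hjne⟩ := hjt'
      have hb1' : b1 = (1, h - 1) := hb1
      rw [Set.mem_singleton_iff] at hb2
      subst hb1'; subst hb2
      obtain ⟨w, hmw, hwy⟩ := exists_mid hw hjne hmy
      obtain ⟨t0, hmt0⟩ := cpartner m
      obtain ⟨u, hwu⟩ := cpartner w
      obtain ⟨t, ht0t⟩ := cpartner t0
      have hwt0 : tdist G.adj w t0 = (1, h - 1) := stepB m t0 w hmt0 hmw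
      have hyu : tdist G.adj y u = (1, h - 1) := stepB w u y hwu hwy
      have ht0u : tdist G.adj t0 u = (1, h - 1) := stepB w u t0 hwu hwt0
      have hut : tdist G.adj u t = (1, h - 1) := stepB t0 t u ht0t ht0u
      have htu : tdist G.adj t u = (h - 1, 1) := by rw [tdist_swap' G.adj u t, hut]; rfl
      have huy : tdist G.adj u y = (h - 1, 1) := by rw [tdist_swap' G.adj y u, hyu]; rfl
      obtain ⟨z, hz⟩ := outA m
      have hzt0 : tdist G.adj z t0 = (q - 1, 1) := stepA m t0 z hmt0 hz
      have ht0z : tdist G.adj t0 z = (1, q - 1) := by rw [tdist_swap' G.adj z t0, hzt0]; rfl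
      have hzt : tdist G.adj z t = (q - 1, 1) := stepA t0 t z ht0t ht0z
      refine ⟨t, ⟨z, hz, hzt⟩, ?_⟩
      show tdist G.adj t y ∈ G.prodS (G.pow (h - 1, 1) 1) {(h - 1, 1)}
      exact ⟨(h - 1, 1), rfl, (h - 1, 1), rfl, pnum_ne_of_tri hw htu huy rfl⟩
  obtain ⟨t, habs, hty⟩ := htail
  rcases hi with rfl | rfl
  · have hit' : it = (q - 1, 1) := hit
    subst hit'
    have hxt : tdist G.adj x t = (q - 1, 1) := absorb m t x habs hxm
    exact ⟨(q - 1, 1), rfl, tdist G.adj t y, hty, pnum_ne_of_tri hw hxt rfl hxy⟩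
  · have hit' : it ∈ G.prodS (G.pow (q - 1, 1) 1) {(q - 1, 1)} := hit
    obtain ⟨a1, ha1, a2, ha2, hine⟩ := hit'
    have ha1' : a1 = (q - 1, 1) := ha1
    rw [Set.mem_singleton_iff] at ha2
    subst ha1'; subst ha2
    obtain ⟨n, hxn, hnm⟩ := exists_mid hw hine hxm
    have hnt : tdist G.adj n t = (q - 1, 1) := absorb m t n habs hnm
    refine ⟨tdist G.adj x t, ?_, tdist G.adj t y, hty, pnum_ne_of_tri hw rfl rfl hxy⟩
    show tdist G.adj x t ∈ G.prodS (G.pow (q - 1, 1) 1) {(q - 1, 1)}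
    exact ⟨(q - 1, 1), rfl, (q - 1, 1), rfl, pnum_ne_of_tri hw hxn hnt rfl⟩
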